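/- Let d ≥ 1, κ ≥ 2d, and let α : ℝ^{2d} → ℂ be measurable with ‖α‖_{A^{κ,2}} < ∞ (the norm taken on ℝ^{2d}). Then for every x ∈ ℝ^d the density ρ(x) := ∫_{ℝ^d} |α(x,v)|² dv satisfies ρ(x) ≤ A(κ,d) ‖α‖_{A^{κ,2}}², where A(κ,d) := inf_{R>0} (1+R)^κ/(ω_d R^d) and ω_d is the Lebesgue volume of the unit ball in ℝ^d. -/

import Mathlib

open MeasureTheory
open scoped ENNReal NNReal

/-- `ℝ^d` as a Euclidean space. -/
abbrev E (d : ℕ) : Type := EuclideanSpace ℝ (Fin d)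

/-- The `A^{κ,p}` norm: `sup_{R ≥ 0} (1+R)^{-κ/p} (∫ sup_{|z̄| ≤ R} ‖f(z+z̄)‖^p dz)^{1/p}`. -/
noncomputable def Anorm {G F : Type*} [NormedAddCommGroup G] [MeasureSpace G]
    [NormedAddCommGroup F] (κ p : ℝ) (f : G → F) : ℝ≥0∞ :=
  ⨆ R : NNReal, (ENNReal.ofReal (1 + (R : ℝ))) ^ (-(κ / p)) *
    (∫⁻ z, ⨆ w ∈ Metric.closedBall (0 : G) (R : ℝ),
      ENNReal.ofReal (‖f (z + w)‖ ^ p)) ^ (1 / p)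

/-- The constant `A(a,d) = inf_{R>0} (1+R)^a / (ω_d R^d)`, where `ω_d` is the Lebesgue
volume of the unit ball in `ℝ^d`. -/
noncomputable def Aconst (d : ℕ) (a : ℝ) : ℝ :=
  ⨅ R : {R : ℝ // 0 < R},
    (1 + R.1) ^ a / ((volume (Metric.ball (0 : E d) 1)).toReal * R.1 ^ (d : ℝ))

/-- Pointwise bound on the spatial density:
`ρ(x) = ∫ |α(x,v)|² dv ≤ A(κ,d) ‖α‖_{A^{κ,2}}²`. -/
theorem statement10 (d : ℕ) (hd : 1 ≤ d) (κ : ℝ) (hκ : 2 * (d : ℝ) ≤ κ)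
    (α : E d × E d → ℂ) (hα : Measurable α) (hfin : Anorm κ 2 α < ⊤) (x : E d) :
    (∫⁻ v : E d, ENNReal.ofReal (‖α (x, v)‖ ^ 2)) ≤
      ENNReal.ofReal (Aconst d κ) * Anorm κ 2 α ^ 2 := by
  classical
  set N := Anorm κ 2 α with hN
  set ω := volume (Metric.ball (0 : E d) 1) with hω
  have hωpos : 0 < ω := Metric.measure_ball_pos volume 0 one_pos
  have hωfin : ω ≠ ⊤ := (MeasureTheory.measure_ball_lt_top).ne
  have hωrpos : 0 < ω.toReal := ENNReal.toReal_pos hωpos.ne' hωfin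
  have hNfin : N ≠ ⊤ := hfin.ne
  set ρ := ∫⁻ v : E d, ENNReal.ofReal (‖α (x, v)‖ ^ 2) with hρ
  have key : ∀ R : ℝ, 0 < R →
      ρ ≤ ENNReal.ofReal ((1 + R) ^ κ / (ω.toReal * R ^ (d : ℝ))) * N ^ 2 := by
    intro R hR
    set R' : ℝ≥0 := ⟨R, hR.le⟩ with hR'
    have hcoe : (R' : ℝ) = R := rfl
    set I := ∫⁻ z : E d × E d, ⨆ w ∈ Metric.closedBall (0 : E d × E d) R,
        ENNReal.ofReal (‖α (z + w)‖ ^ (2 : ℝ)) with hI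
    have hterm : (ENNReal.ofReal (1 + R)) ^ (-(κ / 2)) * I ^ (1 / (2 : ℝ)) ≤ N := by
      have := le_iSup (fun S : ℝ≥0 => (ENNReal.ofReal (1 + (S : ℝ))) ^ (-(κ / 2)) *
        (∫⁻ z : E d × E d, ⨆ w ∈ Metric.closedBall (0 : E d × E d) (S : ℝ),
          ENNReal.ofReal (‖α (z + w)‖ ^ (2 : ℝ))) ^ (1 / (2 : ℝ))) R'
      rw [hcoe] at this
      exact this
    set b := ENNReal.ofReal (1 + R) with hb
    have hb0 : b ≠ 0 := by
      simp [hb, ENNReal.ofReal_pos.2 (by linarith : (0:ℝ) < 1 + R)]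
      positivity
    have hbt : b ≠ ⊤ := ENNReal.ofReal_ne_top
    -- upper bound on I
    have hIle : I ≤ ENNReal.ofReal ((1 + R) ^ κ) * N ^ 2 := by
      have h1 : I ^ (1 / (2 : ℝ)) ≤ b ^ (κ / 2) * N := by
        calc I ^ (1 / (2 : ℝ)) = b ^ (κ / 2) * (b ^ (-(κ / 2)) * I ^ (1 / (2 : ℝ))) := by
              rw [← mul_assoc, ← ENNReal.rpow_add _ _ hb0 hbt]
              simp
          _ ≤ b ^ (κ / 2) * N := mul_le_mul_right hterm _
      have h2 : I = (I ^ (1 / (2 : ℝ))) ^ (2 : ℕ) := by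
        rw [← ENNReal.rpow_natCast (I ^ ((1:ℝ) / 2)) 2, ← ENNReal.rpow_mul]
        norm_num
      calc I = (I ^ (1 / (2 : ℝ))) ^ (2 : ℕ) := h2
        _ ≤ (b ^ (κ / 2) * N) ^ (2 : ℕ) := pow_le_pow_left' h1 2
        _ = (b ^ (κ / 2)) ^ (2 : ℕ) * N ^ 2 := mul_pow _ _ 2
        _ = ENNReal.ofReal ((1 + R) ^ κ) * N ^ 2 := by
              rw [← ENNReal.rpow_natCast (b ^ (κ / 2)) 2, ← ENNReal.rpow_mul]
              norm_num
              rw [hb, ENNReal.ofReal_rpow_of_pos (by linarith : (0:ℝ) < 1 + R)]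
    -- lower bound on I
    have hlow : ENNReal.ofReal (ω.toReal * R ^ (d : ℝ)) * ρ ≤ I := by
      have hpt : ∀ z : E d × E d,
          (Metric.closedBall x R).indicator (fun _ => (1 : ℝ≥0∞)) z.1 *
            ENNReal.ofReal (‖α (x, z.2)‖ ^ 2) ≤
          ⨆ w ∈ Metric.closedBall (0 : E d × E d) R,
            ENNReal.ofReal (‖α (z + w)‖ ^ (2 : ℝ)) := by
        intro z
        by_cases hz : z.1 ∈ Metric.closedBall x R
        · rw [Set.indicator_of_mem hz, one_mul]
          have hw : ((x - z.1, 0) : E d × E d) ∈ Metric.closedBall (0 : E d × E d) R := by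
            rw [Metric.mem_closedBall, dist_zero_right, Prod.norm_def]
            simp only [norm_zero]
            rw [Metric.mem_closedBall] at hz
            have : ‖x - z.1‖ ≤ R := by
              rw [← dist_eq_norm, dist_comm]; exact hz
            exact max_le this hR.le
          have hval : z + ((x - z.1, 0) : E d × E d) = (x, z.2) := by
            ext <;> simp
          refine le_trans ?_ (le_biSup
            (f := fun w : E d × E d => ENNReal.ofReal (‖α (z + w)‖ ^ (2 : ℝ))) hw)
          simp only [hval]
          rw [show (2:ℝ) = ((2:ℕ):ℝ) by norm_num, Real.rpow_natCast]
        · rw [Set.indicator_of_notMem hz, zero_mul]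
          exact zero_le
      have hle := lintegral_mono (μ := (volume : Measure (E d × E d))) hpt
      rw [← hI] at hle
      refine le_trans (le_of_eq ?_) hle
      have hmeas1 : Measurable fun y : E d =>
          (Metric.closedBall x R).indicator (fun _ => (1 : ℝ≥0∞)) y :=
        measurable_const.indicator Metric.isClosed_closedBall.measurableSet
      have hmeas2 : Measurable fun u : E d => ENNReal.ofReal (‖α (x, u)‖ ^ 2) :=
        ((hα.comp measurable_prodMk_left).norm.pow_const 2).ennreal_ofReal
      have hprod : (∫⁻ z : E d × E d,
          (Metric.closedBall x R).indicator (fun _ => (1 : ℝ≥0∞)) z.1 *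
            ENNReal.ofReal (‖α (x, z.2)‖ ^ 2)) =
          (∫⁻ y : E d, (Metric.closedBall x R).indicator (fun _ => (1 : ℝ≥0∞)) y) * ρ := by
        rw [MeasureTheory.Measure.volume_eq_prod]
        exact MeasureTheory.lintegral_prod_mul hmeas1.aemeasurable hmeas2.aemeasurable
      have hind : (∫⁻ y : E d, (Metric.closedBall x R).indicator (fun _ => (1 : ℝ≥0∞)) y) =
          volume (Metric.closedBall x R) :=
        MeasureTheory.lintegral_indicator_one Metric.isClosed_closedBall.measurableSet
      rw [hprod, hind]
      congr 1
      rw [MeasureTheory.Measure.addHaar_closedBall volume x hR.le,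
        finrank_euclideanSpace_fin, ← hω, ENNReal.ofReal_mul hωrpos.le,
        ENNReal.ofReal_toReal hωfin, Real.rpow_natCast, mul_comm]
    -- combine
    have hRd : (0 : ℝ) < R ^ (d : ℝ) := Real.rpow_pos_of_pos hR _
    set C := ENNReal.ofReal (ω.toReal * R ^ (d : ℝ)) with hC
    have hCpos : (0 : ℝ) < ω.toReal * R ^ (d : ℝ) := mul_pos hωrpos hRd
    have hC0 : C ≠ 0 := (ENNReal.ofReal_pos.2 hCpos).ne'
    have hCt : C ≠ ⊤ := ENNReal.ofReal_ne_top
    have : ρ ≤ ENNReal.ofReal ((1 + R) ^ κ) * N ^ 2 / C := by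
      rw [ENNReal.le_div_iff_mul_le (Or.inl hC0) (Or.inl hCt), mul_comm]
      exact le_trans hlow hIle
    refine le_trans this (le_of_eq ?_)
    rw [ENNReal.ofReal_div_of_pos hCpos, div_eq_mul_inv, div_eq_mul_inv, mul_right_comm]
  -- take infimum over R
  have hAconst : ENNReal.ofReal (Aconst d κ) =
      ⨅ R : {R : ℝ // 0 < R}, ENNReal.ofReal
        ((1 + R.1) ^ κ / (ω.toReal * R.1 ^ (d : ℝ))) := by
    have : Nonempty {R : ℝ // 0 < R} := ⟨⟨1, one_pos⟩⟩
    exact ENNReal.ofReal_iInf _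
  haveI : Nonempty {R : ℝ // 0 < R} := ⟨⟨1, one_pos⟩⟩
  rw [hAconst, ENNReal.iInf_mul (fun h => absurd h (ENNReal.pow_ne_top hNfin))]
  exact le_iInf fun R => key R.1 R.2
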